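/- Let G be 2-edge-connected with a 2-edge-cut {e1,e2}, where e1=(u1,u2), e2=(v1,v2), and G−{e1,e2} has components G1 (containing u1,v1) and G2 (containing u2,v2). Let C be any inclusion-wise minimal edge cut of G of size at most 3 with C ∩ {e1,e2} = ∅ and C ⊄ E(G1), C ⊄ E(G2). Then either |C ∩ E(G1)| = 1 or |C ∩ E(G2)| = 1, and (C ∩ E(G1)) ∪ {(u1,v1)} is an edge cut of G1 + (u1,v1) while (C ∩ E(G2)) ∪ {(u2,v2)} is an edge cut of G2 + (u2,v2). -/
import Mathlib


/-- A finite undirected multigraph: each edge `e` has two (not necessarily distinct)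
endpoints `fst e` and `snd e`. -/
structure MGraph (V E : Type*) where
  fst : E → V
  snd : E → V

namespace MGraph

variable {V E : Type*}

/-- `cut G S` is `δ(S)`, the set of edges with exactly one endpoint in `S`. -/
def cut (G : MGraph V E) (S : Set V) : Set E :=
  {e | (G.fst e ∈ S) ↔ (G.snd e ∉ S)}

/-- One step along an edge of `A`. -/
def Step (G : MGraph V E) (A : Set E) (u v : V) : Prop :=
  ∃ e ∈ A, (G.fst e = u ∧ G.snd e = v) ∨ (G.fst e = v ∧ G.snd e = u)

/-- `u` and `v` are connected using only edges from `A`. -/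
def Reach (G : MGraph V E) (A : Set E) (u v : V) : Prop :=
  Relation.ReflTransGen (G.Step A) u v

/-- The spanning subgraph `(V, A)` is connected. -/
def ConnectedOn (G : MGraph V E) (A : Set E) : Prop :=
  ∀ u v : V, G.Reach A u v

/-- The subgraph induced on the vertex set `W`, using only edges of `A` with both
endpoints in `W`, is connected. -/
def InducedConnected (G : MGraph V E) (A : Set E) (W : Set V) : Prop :=
  ∀ u ∈ W, ∀ v ∈ W, G.Reach {e | e ∈ A ∧ G.fst e ∈ W ∧ G.snd e ∈ W} u v

/-- `s` and `t` are `p`-edge-connected in the spanning subgraph `(V, A)`: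
every edge cut separating them has at least `p` edges. -/
def EdgeConnected (G : MGraph V E) (A : Set E) (p : ℕ) (s t : V) : Prop :=
  ∀ S : Set V, s ∈ S → t ∉ S → p ≤ (G.cut S ∩ A).ncard

/-- `S` separates the terminal pair `st`: exactly one of the two terminals lies in `S`. -/
def Separates (S : Set V) (st : V × V) : Prop := (st.1 ∈ S) ↔ (st.2 ∉ S)

/-- `G` is 2-edge-connected: connected, and still connected after removing any single edge. -/
def TwoEdgeConnected (G : MGraph V E) : Prop :=
  G.ConnectedOn Set.univ ∧ ∀ e : E, G.ConnectedOn {e}ᶜ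

/-- `G` is 3-edge-connected: connected, and still connected after removing any two edges. -/
def ThreeEdgeConnected (G : MGraph V E) : Prop :=
  G.ConnectedOn Set.univ ∧ ∀ e f : E, G.ConnectedOn ({e, f} : Set E)ᶜ

/-- `C` is a 2-edge-cut of a 2-edge-connected graph `G`. -/
def TwoEdgeCut (G : MGraph V E) (C : Set E) : Prop :=
  C.ncard = 2 ∧ ¬ G.ConnectedOn Cᶜ

/-- The subgraph of `G` induced on `W` is 2-edge-connected. -/
def InducedTwoEdgeConnected (G : MGraph V E) (W : Set V) : Prop :=
  G.InducedConnected Set.univ W ∧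
    ∀ f : E, G.fst f ∈ W → G.snd f ∈ W → G.InducedConnected {f}ᶜ W

end MGraph

set_option maxHeartbeats 2000000 in
/-- structure of small minimal cuts relative to a 2-edge-cut.
Let `{e1,e2}` be a 2-edge-cut of the 2-edge-connected multigraph `G`, splitting it into
sides `V1` (containing `u1, v1`) and `V2` (containing `u2, v2`). Let `C` be an
inclusion-wise minimal edge cut of `G` with `|C| ≤ 3`, `C ∩ {e1,e2} = ∅` and `C` not
contained in either side. Then `|C ∩ E(G1)| = 1` or `|C ∩ E(G2)| = 1`, and
`(C ∩ E(G1)) ∪ {(u1,v1)}` is an edge cut of `G1 + (u1,v1)` (expressed by a vertex set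
`S ⊆ V1` separating `u1` from `v1` whose boundary inside `V1` is exactly `C ∩ E(G1)`),
and symmetrically for `G2 + (u2,v2)`. -/
theorem stmt12 {V E : Type*} [Fintype V] [Fintype E] (G : MGraph V E)
    (h2ec : G.TwoEdgeConnected)
    (e1 e2 : E) (hne : e1 ≠ e2)
    (u1 u2 v1 v2 : V)
    (he1 : G.fst e1 = u1 ∧ G.snd e1 = u2) (he2 : G.fst e2 = v1 ∧ G.snd e2 = v2)
    (hdisconn : ¬ G.ConnectedOn ({e1, e2} : Set E)ᶜ)
    (V1 V2 : Set V) (hpart : V1 ∪ V2 = Set.univ) (hdisj : Disjoint V1 V2)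
    (hu1 : u1 ∈ V1) (hv1 : v1 ∈ V1) (hu2 : u2 ∈ V2) (hv2 : v2 ∈ V2)
    (hcross : ∀ e : E, e ≠ e1 → e ≠ e2 → ((G.fst e ∈ V1) ↔ (G.snd e ∈ V1)))
    (hG1conn : G.InducedConnected ({e1, e2} : Set E)ᶜ V1)
    (hG2conn : G.InducedConnected ({e1, e2} : Set E)ᶜ V2)
    (C : Set E)
    (hCcut : ∃ S : Set V, S.Nonempty ∧ Sᶜ.Nonempty ∧ C = G.cut S)
    (hCmin : ∀ C' : Set E, C' ⊂ C → C'.Nonempty →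
      ¬ ∃ S : Set V, S.Nonempty ∧ Sᶜ.Nonempty ∧ C' = G.cut S)
    (hC3 : C.ncard ≤ 3) (hCe1 : e1 ∉ C) (hCe2 : e2 ∉ C)
    (hC1 : ¬ C ⊆ {e : E | G.fst e ∈ V1 ∧ G.snd e ∈ V1})
    (hC2 : ¬ C ⊆ {e : E | G.fst e ∈ V2 ∧ G.snd e ∈ V2}) :
    ((C ∩ {e : E | G.fst e ∈ V1 ∧ G.snd e ∈ V1}).ncard = 1 ∨
     (C ∩ {e : E | G.fst e ∈ V2 ∧ G.snd e ∈ V2}).ncard = 1) ∧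
    (∃ S : Set V, S ⊆ V1 ∧ u1 ∈ S ∧ v1 ∈ V1 \ S ∧
      C ∩ {e : E | G.fst e ∈ V1 ∧ G.snd e ∈ V1}
        = {e : E | (G.fst e ∈ V1 ∧ G.snd e ∈ V1) ∧ ((G.fst e ∈ S) ↔ (G.snd e ∉ S))}) ∧
    (∃ S : Set V, S ⊆ V2 ∧ u2 ∈ S ∧ v2 ∈ V2 \ S ∧
      C ∩ {e : E | G.fst e ∈ V2 ∧ G.snd e ∈ V2}
        = {e : E | (G.fst e ∈ V2 ∧ G.snd e ∈ V2) ∧ ((G.fst e ∈ S) ↔ (G.snd e ∉ S))}) := by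
  classical
  obtain ⟨S, hSne, hScne, rfl⟩ := hCcut
  obtain ⟨hf1, hs1⟩ := he1
  obtain ⟨hf2, hs2⟩ := he2
  set A : Set E := G.cut S ∩ {e | G.fst e ∈ V1 ∧ G.snd e ∈ V1} with hA
  set B : Set E := G.cut S ∩ {e | G.fst e ∈ V2 ∧ G.snd e ∈ V2} with hB
  have hd12 : ∀ x : V, x ∈ V1 → x ∈ V2 → False := fun x h1 h2 =>
    Set.disjoint_left.mp hdisj h1 h2
  have hVall : ∀ x : V, x ∈ V1 ∨ x ∈ V2 := by
    intro x
    have hx : x ∈ V1 ∪ V2 := hpart.symm ▸ Set.mem_univ x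
    exact hx
  have hside : ∀ e : E, e ≠ e1 → e ≠ e2 →
      (G.fst e ∈ V1 ∧ G.snd e ∈ V1) ∨ (G.fst e ∈ V2 ∧ G.snd e ∈ V2) := by
    intro e h1 h2
    have hx := hcross e h1 h2
    rcases hVall (G.fst e) with h | h
    · exact Or.inl ⟨h, hx.mp h⟩
    · refine Or.inr ⟨h, ?_⟩
      rcases hVall (G.snd e) with h' | h'
      · exact absurd (hx.mpr h') (fun hh => hd12 _ hh h)
      · exact h'
  have hu12 : u1 ∈ S ↔ u2 ∈ S := by
    simp only [MGraph.cut, Set.mem_setOf_eq, hf1, hs1] at hCe1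
    tauto
  have hv12 : v1 ∈ S ↔ v2 ∈ S := by
    simp only [MGraph.cut, Set.mem_setOf_eq, hf2, hs2] at hCe2
    tauto
  have hAne : A.Nonempty := by
    rw [Set.not_subset] at hC2
    obtain ⟨e, heC, heE2⟩ := hC2
    have h1 : e ≠ e1 := fun h => hCe1 (h ▸ heC)
    have h2 : e ≠ e2 := fun h => hCe2 (h ▸ heC)
    rcases hside e h1 h2 with h | h
    · exact ⟨e, heC, h⟩
    · exact absurd h heE2
  have hBne : B.Nonempty := by
    rw [Set.not_subset] at hC1
    obtain ⟨e, heC, heE1⟩ := hC1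
    have h1 : e ≠ e1 := fun h => hCe1 (h ▸ heC)
    have h2 : e ≠ e2 := fun h => hCe2 (h ▸ heC)
    rcases hside e h1 h2 with h | h
    · exact absurd h heE1
    · exact ⟨e, heC, h⟩
  have hsep1 : u1 ∈ S ↔ v1 ∉ S := by
    by_contra hcon
    have h' : u1 ∈ S ↔ v1 ∈ S := by tauto
    set T : Set V := {x | x ∈ V1 ∧ ((x ∈ S) ↔ (u1 ∉ S))} with hT
    have hu1T : u1 ∉ T := by
      rw [hT]
      intro h
      exact absurd h.2 (by tauto)
    have hEq : A = G.cut T := by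
      ext e
      by_cases he1e : e = e1
      · subst he1e
        constructor
        · intro h
          rw [hA] at h
          exact absurd h.1 hCe1
        · intro h
          simp only [MGraph.cut, Set.mem_setOf_eq, hf1, hs1] at h
          have h2' : u2 ∉ T := by rw [hT]; exact fun hh => hd12 _ hh.1 hu2
          exact absurd (h.mpr h2') hu1T
      · by_cases he2e : e = e2
        · subst he2e
          constructor
          · intro h
            rw [hA] at h
            exact absurd h.1 hCe2
          · intro h
            simp only [MGraph.cut, Set.mem_setOf_eq, hf2, hs2] at h
            have h2' : v2 ∉ T := by rw [hT]; exact fun hh => hd12 _ hh.1 hv2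
            have h3 := h.mpr h2'
            rw [hT] at h3
            simp only [Set.mem_setOf_eq] at h3
            exact absurd h3.2 (by tauto)
        · rcases hside e he1e he2e with hEe | hEe
          · obtain ⟨hfe, hse⟩ := hEe
            rw [hA]
            simp only [Set.mem_inter_iff, MGraph.cut, Set.mem_setOf_eq, hT, hfe, hse,
              true_and, and_true]
            tauto
          · obtain ⟨hfe, hse⟩ := hEe
            have hfe' : G.fst e ∉ V1 := fun hh => hd12 _ hh hfe
            have hse' : G.snd e ∉ V1 := fun hh => hd12 _ hh hse
            rw [hA]
            simp only [Set.mem_inter_iff, MGraph.cut, Set.mem_setOf_eq, hT, hfe', hse']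
            tauto
    obtain ⟨e, he⟩ := hAne
    rw [hA, Set.mem_inter_iff] at he
    obtain ⟨heC, hfe, hse⟩ := he
    simp only [MGraph.cut, Set.mem_setOf_eq] at heC
    have hTne : T.Nonempty := by
      by_cases hu : u1 ∈ S <;> by_cases hfs : G.fst e ∈ S
      · exact ⟨G.snd e, by rw [hT]; exact ⟨hse, by tauto⟩⟩
      · exact ⟨G.fst e, by rw [hT]; exact ⟨hfe, by tauto⟩⟩
      · exact ⟨G.fst e, by rw [hT]; exact ⟨hfe, by tauto⟩⟩
      · exact ⟨G.snd e, by rw [hT]; exact ⟨hse, by tauto⟩⟩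
    have hTcne : Tᶜ.Nonempty := ⟨u1, hu1T⟩
    obtain ⟨f, hf⟩ := hBne
    rw [hB, Set.mem_inter_iff] at hf
    obtain ⟨hfC, hff, hfs'⟩ := hf
    have hss : A ⊂ G.cut S := by
      refine (Set.ssubset_iff_of_subset (by rw [hA]; exact Set.inter_subset_left)).mpr
        ⟨f, hfC, fun hfA => ?_⟩
      rw [hA] at hfA
      exact hd12 _ hfA.2.1 hff
    exact hCmin A hss ⟨e, by rw [hA]; exact ⟨heC, hfe, hse⟩⟩ ⟨T, hTne, hTcne, hEq⟩
  have hsep2 : u2 ∈ S ↔ v2 ∉ S := by tauto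
  have hABdisj : Disjoint A B := by
    rw [Set.disjoint_left]
    intro e heA heB
    rw [hA] at heA; rw [hB] at heB
    exact hd12 _ heA.2.1 heB.2.1
  have hABun : A ∪ B = G.cut S := by
    apply Set.Subset.antisymm
    · rw [hA, hB]; exact Set.union_subset Set.inter_subset_left Set.inter_subset_left
    · intro e he
      have h1 : e ≠ e1 := fun h => hCe1 (h ▸ he)
      have h2 : e ≠ e2 := fun h => hCe2 (h ▸ he)
      rcases hside e h1 h2 with h | h
      · exact Or.inl (by rw [hA]; exact ⟨he, h⟩)
      · exact Or.inr (by rw [hB]; exact ⟨he, h⟩)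
  refine ⟨?_, ?_, ?_⟩
  · have hcard : A.ncard + B.ncard ≤ 3 := by
      calc A.ncard + B.ncard = (A ∪ B).ncard :=
            (Set.ncard_union_eq hABdisj (Set.toFinite _) (Set.toFinite _)).symm
        _ ≤ 3 := by rw [hABun]; exact hC3
    have hA1 : 0 < A.ncard := (Set.ncard_pos (Set.toFinite _)).mpr hAne
    have hB1 : 0 < B.ncard := (Set.ncard_pos (Set.toFinite _)).mpr hBne
    omega
  · refine ⟨{x | x ∈ V1 ∧ ((x ∈ S) ↔ (u1 ∈ S))}, fun x hx => hx.1,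
      ⟨hu1, Iff.rfl⟩, ⟨hv1, fun hv => ?_⟩, ?_⟩
    · simp only [Set.mem_setOf_eq] at hv
      exact absurd hv.2 (by tauto)
    · rw [hA]
      ext e
      simp only [Set.mem_inter_iff, MGraph.cut, Set.mem_setOf_eq]
      by_cases h : G.fst e ∈ V1 ∧ G.snd e ∈ V1
      · obtain ⟨h1, h2⟩ := h
        simp only [h1, h2, true_and, and_true]
        tauto
      · tauto
  · refine ⟨{x | x ∈ V2 ∧ ((x ∈ S) ↔ (u2 ∈ S))}, fun x hx => hx.1,
      ⟨hu2, Iff.rfl⟩, ⟨hv2, fun hv => ?_⟩, ?_⟩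
    · simp only [Set.mem_setOf_eq] at hv
      exact absurd hv.2 (by tauto)
    · rw [hB]
      ext e
      simp only [Set.mem_inter_iff, MGraph.cut, Set.mem_setOf_eq]
      by_cases h : G.fst e ∈ V2 ∧ G.snd e ∈ V2
      · obtain ⟨h1, h2⟩ := h
        simp only [h1, h2, true_and, and_true]
        tauto
      · tauto
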